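/- Let d ≥ 1 be an integer, let α, β be real numbers with α + β < −d, and let m, k ≥ 0 be integers. For every Schwartz function φ on ℝ^d the double integral ∫∫_{|x|≥1, |y|≥1} |x|^{α} (1 + log|x|)^{m} · |y|^{β} (1 + log|y|)^{k} · |φ(x+y)| dx dy is finite. (This integrability statement is the analytic core of the convolvability of the renormalized distributions R_d[r^λ log^m(r/l)] and R_d[r^μ log^k(r/l)] whenever Re(λ+μ) < −d.) -/
import Mathlib


open MeasureTheory Real SchwartzMap

noncomputable section

private lemma log_pow_bound (ε : ℝ) (hε : 0 < ε) (m : ℕ) :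
    ∃ A : ℝ, 0 ≤ A ∧ ∀ t : ℝ, 1 ≤ t → (1 + Real.log t) ^ m ≤ A * t ^ ε := by
  set δ : ℝ := ε / (m + 1) with hδdef
  have hδ : 0 < δ := by positivity
  refine ⟨(1 + δ⁻¹) ^ m, by positivity, fun t ht => ?_⟩
  have ht0 : (0 : ℝ) < t := lt_of_lt_of_le one_pos ht
  have h1t : (1 : ℝ) ≤ t ^ δ := Real.one_le_rpow ht hδ.le
  have h1 : 1 + Real.log t ≤ (1 + δ⁻¹) * t ^ δ := by
    have hlog : Real.log t ≤ t ^ δ / δ := Real.log_le_rpow_div ht0.le hδ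
    have : t ^ δ / δ = δ⁻¹ * t ^ δ := by ring
    nlinarith
  have h0 : 0 ≤ 1 + Real.log t := by
    have := Real.log_nonneg ht; linarith
  calc (1 + Real.log t) ^ m ≤ ((1 + δ⁻¹) * t ^ δ) ^ m := pow_le_pow_left₀ h0 h1 m
    _ = (1 + δ⁻¹) ^ m * (t ^ δ) ^ m := mul_pow _ _ _
    _ = (1 + δ⁻¹) ^ m * t ^ (δ * m) := by
        rw [← Real.rpow_natCast (t ^ δ) m, ← Real.rpow_mul ht0.le]
    _ ≤ (1 + δ⁻¹) ^ m * t ^ ε := by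
        have hδm : δ * m ≤ ε := by
          rw [hδdef, div_mul_eq_mul_div, div_le_iff₀ (by positivity : (0:ℝ) < (m:ℝ) + 1)]
          nlinarith [hε.le, (Nat.cast_nonneg m : (0:ℝ) ≤ m)]
        exact mul_le_mul_of_nonneg_left
          (Real.rpow_le_rpow_of_exponent_le ht hδm) (by positivity)

/-- `(1+t)^r ≤ 2^|r| * t^r` for `t ≥ 1`. -/
private lemma rpow_one_add_le {t : ℝ} (ht : 1 ≤ t) (r : ℝ) :
    (1 + t) ^ r ≤ 2 ^ |r| * t ^ r := by
  have ht0 : (0 : ℝ) < t := lt_of_lt_of_le one_pos ht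
  rcases le_or_gt 0 r with hr | hr
  · rw [abs_of_nonneg hr]
    calc (1 + t) ^ r ≤ (2 * t) ^ r :=
          Real.rpow_le_rpow (by linarith) (by linarith) hr
      _ = 2 ^ r * t ^ r := Real.mul_rpow (by norm_num) ht0.le
  · rw [abs_of_neg hr]
    have h1 : (1 + t) ^ r ≤ t ^ r :=
      Real.rpow_le_rpow_of_nonpos ht0 (by linarith) hr.le
    have h2 : (1 : ℝ) ≤ 2 ^ (-r) := Real.one_le_rpow (by norm_num) (by linarith)
    nlinarith [Real.rpow_nonneg ht0.le r]

/-- `u^r ≤ 2^|r| * (1+u)^r` for `u ≥ 1`. -/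
private lemma rpow_le_one_add {u : ℝ} (hu : 1 ≤ u) (r : ℝ) :
    u ^ r ≤ 2 ^ |r| * (1 + u) ^ r := by
  have hu0 : (0 : ℝ) < u := lt_of_lt_of_le one_pos hu
  rcases le_or_gt 0 r with hr | hr
  · rw [abs_of_nonneg hr]
    have h1 : u ^ r ≤ (1 + u) ^ r := Real.rpow_le_rpow hu0.le (by linarith) hr
    have h2 : (1 : ℝ) ≤ 2 ^ r := Real.one_le_rpow (by norm_num) hr
    nlinarith [Real.rpow_nonneg (by linarith : (0:ℝ) ≤ 1 + u) r]
  · rw [abs_of_neg hr]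
    have h1 : (2 * u) ^ r ≤ (1 + u) ^ r :=
      Real.rpow_le_rpow_of_nonpos (by linarith) (by linarith) hr.le
    have h2 : (2 * u) ^ r = 2 ^ r * u ^ r := Real.mul_rpow (by norm_num) hu0.le
    have h3 : 2 ^ (-r) * 2 ^ r = (1 : ℝ) := by
      rw [← Real.rpow_add (by norm_num : (0:ℝ) < 2)]; norm_num
    calc u ^ r = 2 ^ (-r) * (2 ^ r * u ^ r) := by rw [← mul_assoc, h3, one_mul]
      _ ≤ 2 ^ (-r) * (1 + u) ^ r := by
          rw [← h2]
          exact mul_le_mul_of_nonneg_left h1 (Real.rpow_nonneg (by norm_num) _)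

/-- Peetre-type inequality. -/
private lemma peetre_rpow {t u v : ℝ} (ht : 0 ≤ t) (hu : 0 ≤ u) (hv : 0 ≤ v)
    (h1 : u ≤ t + v) (h2 : t ≤ u + v) (r : ℝ) :
    (1 + u) ^ r ≤ (1 + t) ^ r * (1 + v) ^ |r| := by
  have h1t : (0 : ℝ) < 1 + t := by linarith
  have h1u : (0 : ℝ) < 1 + u := by linarith
  have h1v : (0 : ℝ) < 1 + v := by linarith
  rcases le_or_gt 0 r with hr | hr
  · rw [abs_of_nonneg hr]
    calc (1 + u) ^ r ≤ ((1 + t) * (1 + v)) ^ r :=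
          Real.rpow_le_rpow h1u.le (by nlinarith) hr
      _ = (1 + t) ^ r * (1 + v) ^ r := Real.mul_rpow h1t.le h1v.le
  · rw [abs_of_neg hr]
    have key : (1 + t) / (1 + v) ≤ 1 + u := by
      rw [div_le_iff₀ h1v]; nlinarith
    calc (1 + u) ^ r ≤ ((1 + t) / (1 + v)) ^ r :=
          Real.rpow_le_rpow_of_nonpos (by positivity) key hr.le
      _ = (1 + t) ^ r / (1 + v) ^ r := Real.div_rpow h1t.le h1v.le r
      _ = (1 + t) ^ r * (1 + v) ^ (-r) := by
          rw [Real.rpow_neg h1v.le, div_eq_mul_inv]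

private lemma schwartz_bound {d : ℕ} (φ : SchwartzMap (EuclideanSpace ℝ (Fin d)) ℝ)
    (N : ℕ) : ∃ C : ℝ, 0 ≤ C ∧ ∀ z, |φ z| ≤ C * (1 + ‖z‖) ^ (-(N : ℝ)) := by
  set C : ℝ := 2 ^ N * (Finset.Iic (N, 0)).sup
    (fun p => SchwartzMap.seminorm ℝ p.1 p.2) φ with hCdef
  have hC0 : 0 ≤ C := by
    apply mul_nonneg (by positivity)
    exact apply_nonneg _ _
  refine ⟨C, hC0, fun z => ?_⟩
  have h := SchwartzMap.one_add_le_sup_seminorm_apply (𝕜 := ℝ) (m := (N, 0))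
    le_rfl le_rfl φ z
  rw [norm_iteratedFDeriv_zero] at h
  have h1z : (0 : ℝ) < 1 + ‖z‖ := by positivity
  have hpow : (1 + ‖z‖) ^ (-(N : ℝ)) = ((1 + ‖z‖) ^ N)⁻¹ := by
    rw [Real.rpow_neg h1z.le, Real.rpow_natCast]
  rw [hpow, ← div_eq_mul_inv, le_div_iff₀ (by positivity)]
  calc |φ z| * (1 + ‖z‖) ^ N = (1 + ‖z‖) ^ N * ‖φ z‖ := by
        rw [Real.norm_eq_abs]; ring
    _ ≤ C := h

/-- The pointwise estimate. -/
private lemma pointwise_bound (α β ε : ℝ) (N m k : ℕ) (A B C : ℝ)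
    (hA0 : 0 ≤ A) (hB0 : 0 ≤ B) (hC0 : 0 ≤ C)
    (hγ0 : α + β + 2 * ε < 0)
    (t u v F : ℝ) (ht : 1 ≤ t) (hu : 1 ≤ u) (hv : 0 ≤ v) (hF0 : 0 ≤ F)
    (htv : u ≤ t + v) (hut : t ≤ u + v)
    (hlt : (1 + Real.log t) ^ m ≤ A * t ^ ε)
    (hlu : (1 + Real.log u) ^ k ≤ B * u ^ ε)
    (hφ : F ≤ C * (1 + v) ^ (-(N : ℝ))) :
    t ^ α * (1 + Real.log t) ^ m * (u ^ β * (1 + Real.log u) ^ k) * F ≤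
      A * B * C * 2 ^ |β + ε| * 2 ^ |β + ε| * 2 ^ (-(α + β + 2 * ε)) *
        ((1 + t) ^ (α + β + 2 * ε) * (1 + v) ^ (|β + ε| - (N : ℝ))) := by
  have ht0 : (0 : ℝ) < t := lt_of_lt_of_le one_pos ht
  have hu0 : (0 : ℝ) < u := lt_of_lt_of_le one_pos hu
  have h1v : (0 : ℝ) < 1 + v := by linarith
  have h1t : (0 : ℝ) < 1 + t := by linarith
  have hlt0 : 0 ≤ 1 + Real.log t := by have := Real.log_nonneg ht; linarith
  have hlu0 : 0 ≤ 1 + Real.log u := by have := Real.log_nonneg hu; linarith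
  set b : ℝ := |β + ε| with hbdef
  have hb0 : (0 : ℝ) ≤ b := abs_nonneg _
  set γ : ℝ := α + β + 2 * ε with hγdef
  have e1 : t ^ α * (1 + Real.log t) ^ m ≤ A * t ^ (α + ε) := by
    calc t ^ α * (1 + Real.log t) ^ m ≤ t ^ α * (A * t ^ ε) :=
          mul_le_mul_of_nonneg_left hlt (Real.rpow_nonneg ht0.le _)
      _ = A * t ^ (α + ε) := by rw [Real.rpow_add ht0]; ring
  have e2 : u ^ β * (1 + Real.log u) ^ k ≤ B * u ^ (β + ε) := by
    calc u ^ β * (1 + Real.log u) ^ k ≤ u ^ β * (B * u ^ ε) :=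
          mul_le_mul_of_nonneg_left hlu (Real.rpow_nonneg hu0.le _)
      _ = B * u ^ (β + ε) := by rw [Real.rpow_add hu0]; ring
  have hs : u ^ (β + ε) ≤ 2 ^ b * 2 ^ b * (t ^ (β + ε) * (1 + v) ^ b) := by
    have s1 : u ^ (β + ε) ≤ 2 ^ b * (1 + u) ^ (β + ε) := rpow_le_one_add hu _
    have s2 : (1 + u) ^ (β + ε) ≤ (1 + t) ^ (β + ε) * (1 + v) ^ b :=
      peetre_rpow ht0.le hu0.le hv htv hut _
    have s3 : (1 + t) ^ (β + ε) ≤ 2 ^ b * t ^ (β + ε) := rpow_one_add_le ht _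
    calc u ^ (β + ε) ≤ 2 ^ b * (1 + u) ^ (β + ε) := s1
      _ ≤ 2 ^ b * ((1 + t) ^ (β + ε) * (1 + v) ^ b) :=
          mul_le_mul_of_nonneg_left s2 (Real.rpow_nonneg (by norm_num) _)
      _ ≤ 2 ^ b * ((2 ^ b * t ^ (β + ε)) * (1 + v) ^ b) :=
          mul_le_mul_of_nonneg_left
            (mul_le_mul_of_nonneg_right s3 (Real.rpow_nonneg h1v.le _))
            (Real.rpow_nonneg (by norm_num) _)
      _ = 2 ^ b * 2 ^ b * (t ^ (β + ε) * (1 + v) ^ b) := by ring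
  have htγ : t ^ γ ≤ 2 ^ (-γ) * (1 + t) ^ γ := by
    have := rpow_le_one_add ht γ
    rwa [abs_of_neg hγ0] at this
  calc t ^ α * (1 + Real.log t) ^ m * (u ^ β * (1 + Real.log u) ^ k) * F
      ≤ (A * t ^ (α + ε)) * (B * u ^ (β + ε)) * (C * (1 + v) ^ (-(N : ℝ))) := by
        refine mul_le_mul (mul_le_mul e1 e2 ?_ ?_) hφ hF0 ?_
        · exact mul_nonneg (Real.rpow_nonneg hu0.le _) (pow_nonneg hlu0 k)
        · exact mul_nonneg hA0 (Real.rpow_nonneg ht0.le _)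
        · exact mul_nonneg (mul_nonneg hA0 (Real.rpow_nonneg ht0.le _))
            (mul_nonneg hB0 (Real.rpow_nonneg hu0.le _))
    _ ≤ (A * t ^ (α + ε)) * (B * (2 ^ b * 2 ^ b * (t ^ (β + ε) * (1 + v) ^ b))) *
          (C * (1 + v) ^ (-(N : ℝ))) := by
        refine mul_le_mul_of_nonneg_right (mul_le_mul_of_nonneg_left
          (mul_le_mul_of_nonneg_left hs hB0)
          (mul_nonneg hA0 (Real.rpow_nonneg ht0.le _)))
          (mul_nonneg hC0 (Real.rpow_nonneg h1v.le _))
    _ = A * B * C * 2 ^ b * 2 ^ b *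
          ((t ^ (α + ε) * t ^ (β + ε)) * ((1 + v) ^ b * (1 + v) ^ (-(N : ℝ)))) := by
        ring
    _ = A * B * C * 2 ^ b * 2 ^ b * (t ^ γ * (1 + v) ^ (b - (N : ℝ))) := by
        rw [← Real.rpow_add ht0, ← Real.rpow_add h1v]
        have hexp : α + ε + (β + ε) = γ := by rw [hγdef]; ring
        have hexp2 : b + -(N : ℝ) = b - (N : ℝ) := by ring
        rw [hexp, hexp2]
    _ ≤ A * B * C * 2 ^ b * 2 ^ b *
          ((2 ^ (-γ) * (1 + t) ^ γ) * (1 + v) ^ (b - (N : ℝ))) := by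
        refine mul_le_mul_of_nonneg_left
          (mul_le_mul_of_nonneg_right htγ (Real.rpow_nonneg h1v.le _)) ?_
        have h2b : (0:ℝ) ≤ 2 ^ b := Real.rpow_nonneg (by norm_num) _
        exact mul_nonneg (mul_nonneg (mul_nonneg (mul_nonneg hA0 hB0) hC0) h2b) h2b
    _ = A * B * C * 2 ^ b * 2 ^ b * 2 ^ (-γ) *
          ((1 + t) ^ γ * (1 + v) ^ (b - (N : ℝ))) := by ring

/-- the analytic core of the convolvability of the renormalized
distributions `R_d[r^λ log^m(r/l)]` and `R_d[r^μ log^k(r/l)]` for `Re(λ+μ) < -d`: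
for `α + β < -d`, the double integral
`∫∫_{|x|≥1,|y|≥1} |x|^α (1+log|x|)^m |y|^β (1+log|y|)^k |φ(x+y)| dx dy` is finite. -/
theorem stmt_15 (d : ℕ) (hd : 1 ≤ d) (α β : ℝ) (h : α + β < -(d : ℝ)) (m k : ℕ)
    (φ : SchwartzMap (EuclideanSpace ℝ (Fin d)) ℝ) :
    IntegrableOn
      (fun q : EuclideanSpace ℝ (Fin d) × EuclideanSpace ℝ (Fin d) =>
        ‖q.1‖ ^ α * (1 + Real.log ‖q.1‖) ^ m * (‖q.2‖ ^ β * (1 + Real.log ‖q.2‖) ^ k) *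
          |φ (q.1 + q.2)|)
      {q : EuclideanSpace ℝ (Fin d) × EuclideanSpace ℝ (Fin d) |
        1 ≤ ‖q.1‖ ∧ 1 ≤ ‖q.2‖} := by
  set E := EuclideanSpace ℝ (Fin d)
  have hd0 : (1 : ℝ) ≤ (d : ℝ) := by exact_mod_cast hd
  set ε : ℝ := (-(d : ℝ) - (α + β)) / 4 with hεdef
  have hε : 0 < ε := by rw [hεdef]; linarith
  set γ : ℝ := α + β + 2 * ε with hγdef
  have hγ : γ < -(d : ℝ):= by rw [hγdef, hεdef]; linarith
  have hγ0 : γ < 0 := by linarith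
  obtain ⟨A, hA0, hA⟩ := log_pow_bound ε hε m
  obtain ⟨B, hB0, hB⟩ := log_pow_bound ε hε k
  set b : ℝ := |β + ε| with hbdef
  have hb0 : (0 : ℝ) ≤ b := abs_nonneg _
  set N : ℕ := d + 1 + ⌈b⌉₊ with hNdef
  have hNb : (d : ℝ) < (N : ℝ) - b := by
    have hceil : b ≤ (⌈b⌉₊ : ℝ) := Nat.le_ceil b
    have : (N : ℝ) = (d : ℝ) + 1 + (⌈b⌉₊ : ℝ) := by rw [hNdef]; push_cast; ring
    linarith
  obtain ⟨C, hC0, hC⟩ := schwartz_bound φ N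
  set K : ℝ := A * B * C * 2 ^ b * 2 ^ b * 2 ^ (-γ) with hKdef
  have hK0 : 0 ≤ K := by
    have h2b : (0:ℝ) ≤ (2:ℝ) ^ b := Real.rpow_nonneg (by norm_num) _
    have h2γ : (0:ℝ) ≤ (2:ℝ) ^ (-γ) := Real.rpow_nonneg (by norm_num) _
    exact mul_nonneg (mul_nonneg (mul_nonneg (mul_nonneg (mul_nonneg hA0 hB0) hC0) h2b) h2b) h2γ
  -- the dominating function
  have hDint : Integrable (fun q : E × E =>
      K * ((1 + ‖q.1‖) ^ γ * (1 + ‖q.1 + q.2‖) ^ (b - (N : ℝ)))) := by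
    have h1 : Integrable (fun x : E => (1 + ‖x‖) ^ γ) := by
      have := integrable_one_add_norm (E := E) (μ := volume) (r := -γ)
        (by rw [finrank_euclideanSpace_fin]; linarith)
      simpa using this
    have h2 : Integrable (fun z : E => (1 + ‖z‖) ^ (b - (N : ℝ))) := by
      have := integrable_one_add_norm (E := E) (μ := volume) (r := (N : ℝ) - b)
        (by rw [finrank_euclideanSpace_fin]; linarith)
      have heq : -((N : ℝ) - b) = b - (N : ℝ) := by ring
      rw [heq] at this
      exact this
    have hprod : Integrable (fun p : E × E => (1 + ‖p.1‖) ^ γ * (1 + ‖p.2‖) ^ (b - (N : ℝ)))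
        ((volume : Measure E).prod (volume : Measure E)) := h1.mul_prod h2
    have hmp : MeasurePreserving (fun z : E × E => (z.1, z.1 + z.2))
        ((volume : Measure E).prod (volume : Measure E))
        ((volume : Measure E).prod (volume : Measure E)) :=
      measurePreserving_prod_add _ _
    have hcomp : Integrable ((fun p : E × E => (1 + ‖p.1‖) ^ γ * (1 + ‖p.2‖) ^ (b - (N : ℝ))) ∘
        (fun z : E × E => (z.1, z.1 + z.2)))
        ((volume : Measure E).prod (volume : Measure E)) :=
      (hmp.integrable_comp hprod.aestronglyMeasurable).2 hprod
    have : Integrable (fun q : E × E => (1 + ‖q.1‖) ^ γ * (1 + ‖q.1 + q.2‖) ^ (b - (N : ℝ)))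
        ((volume : Measure E).prod (volume : Measure E)) := hcomp
    rw [← Measure.volume_eq_prod] at this
    exact this.const_mul K
  have hmeasS : MeasurableSet {q : E × E | 1 ≤ ‖q.1‖ ∧ 1 ≤ ‖q.2‖} := by
    have : {q : E × E | 1 ≤ ‖q.1‖ ∧ 1 ≤ ‖q.2‖} =
        (fun q : E × E => ‖q.1‖) ⁻¹' Set.Ici 1 ∩ (fun q : E × E => ‖q.2‖) ⁻¹' Set.Ici 1 := rfl
    rw [this]
    exact ((measurable_fst.norm) measurableSet_Ici).inter
      ((measurable_snd.norm) measurableSet_Ici)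
  refine Integrable.mono' hDint.integrableOn ?_ ?_
  · apply Measurable.aestronglyMeasurable
    have h1 : Measurable fun q : E × E => ‖q.1‖ ^ α := by fun_prop
    have h2 : Measurable fun q : E × E => (1 + Real.log ‖q.1‖) ^ m :=
      (measurable_const.add
        (Real.measurable_log.comp (measurable_norm.comp measurable_fst))).pow_const m
    have h3 : Measurable fun q : E × E => ‖q.2‖ ^ β := by fun_prop
    have h4 : Measurable fun q : E × E => (1 + Real.log ‖q.2‖) ^ k :=
      (measurable_const.add
        (Real.measurable_log.comp (measurable_norm.comp measurable_snd))).pow_const k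
    have h5 : Measurable fun q : E × E => |φ (q.1 + q.2)| :=
      ((φ.continuous.comp (continuous_fst.add continuous_snd)).abs).measurable
    exact ((h1.mul h2).mul (h3.mul h4)).mul h5
  · rw [ae_restrict_iff' hmeasS]
    filter_upwards with q hq
    obtain ⟨hx, hy⟩ := hq
    have ht0 : (0 : ℝ) < ‖q.1‖ := lt_of_lt_of_le one_pos hx
    have hu0 : (0 : ℝ) < ‖q.2‖ := lt_of_lt_of_le one_pos hy
    have hlt0 : 0 ≤ 1 + Real.log ‖q.1‖ := by have := Real.log_nonneg hx; linarith
    have hlu0 : 0 ≤ 1 + Real.log ‖q.2‖ := by have := Real.log_nonneg hy; linarith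
    have hfnn : 0 ≤ ‖q.1‖ ^ α * (1 + Real.log ‖q.1‖) ^ m *
        (‖q.2‖ ^ β * (1 + Real.log ‖q.2‖) ^ k) * |φ (q.1 + q.2)| := by
      refine mul_nonneg (mul_nonneg (mul_nonneg (Real.rpow_nonneg ht0.le _)
        (pow_nonneg hlt0 m)) (mul_nonneg (Real.rpow_nonneg hu0.le _)
        (pow_nonneg hlu0 k))) (abs_nonneg _)
    rw [Real.norm_eq_abs, abs_of_nonneg hfnn]
    have htv : ‖q.2‖ ≤ ‖q.1‖ + ‖q.1 + q.2‖ := by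
      have : q.2 = (q.1 + q.2) - q.1 := by abel
      calc ‖q.2‖ = ‖(q.1 + q.2) - q.1‖ := by rw [← this]
        _ ≤ ‖q.1 + q.2‖ + ‖q.1‖ := norm_sub_le _ _
        _ = ‖q.1‖ + ‖q.1 + q.2‖ := by ring
    have hut : ‖q.1‖ ≤ ‖q.2‖ + ‖q.1 + q.2‖ := by
      have : q.1 = (q.1 + q.2) - q.2 := by abel
      calc ‖q.1‖ = ‖(q.1 + q.2) - q.2‖ := by rw [← this]
        _ ≤ ‖q.1 + q.2‖ + ‖q.2‖ := norm_sub_le _ _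
        _ = ‖q.2‖ + ‖q.1 + q.2‖ := by ring
    have key := pointwise_bound α β ε N m k A B C hA0 hB0 hC0 (by rw [← hγdef]; exact hγ0)
      ‖q.1‖ ‖q.2‖ ‖q.1 + q.2‖ |φ (q.1 + q.2)| hx hy (norm_nonneg _) (abs_nonneg _)
      htv hut (hA _ hx) (hB _ hy) (hC _)
    calc ‖q.1‖ ^ α * (1 + Real.log ‖q.1‖) ^ m *
          (‖q.2‖ ^ β * (1 + Real.log ‖q.2‖) ^ k) * |φ (q.1 + q.2)| ≤
        A * B * C * 2 ^ |β + ε| * 2 ^ |β + ε| * 2 ^ (-(α + β + 2 * ε)) *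
          ((1 + ‖q.1‖) ^ (α + β + 2 * ε) * (1 + ‖q.1 + q.2‖) ^ (|β + ε| - (N : ℝ))) := key
      _ = K * ((1 + ‖q.1‖) ^ γ * (1 + ‖q.1 + q.2‖) ^ (b - (N : ℝ))) := by
          rw [hKdef, hbdef, hγdef]

end
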